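/- Let A be a C*-algebra, b', h ∈ A positive contractions with db' = b' for some positive contraction d satisfying ‖d(1−h)‖ ≤ √δ (in the unitization), where 0 < δ < 1. Set b'' := (b')^{1/2} h² (b')^{1/2}. Then b'' ≤ b' and b'' ≥ (1 − 2√δ)·b'; consequently ‖b' − b''‖ ≤ 2√δ. -/

import Mathlib

open scoped CStarAlgebra


/-- Let `b', h, d` be positive contractions in a C*-algebra with
`d b' = b'` and `‖d(1 - h)‖ ≤ √δ` (in the unitization), where `0 < δ < 1`.
Set `b'' := (b')^{1/2} h² (b')^{1/2}`.  Then `b'' ≤ b'`,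
`(1 - 2√δ) b' ≤ b''`, and consequently `‖b' - b''‖ ≤ 2√δ`. -/
theorem b''_comparisons {A : Type*} [NonUnitalCStarAlgebra A] [StarModule ℂ A]
    [PartialOrder A] [StarOrderedRing A]
    (b' h d : A) (hb' : 0 ≤ b') (hb'1 : ‖b'‖ ≤ 1) (hh : 0 ≤ h) (hh1 : ‖h‖ ≤ 1)
    (hd : 0 ≤ d) (hd1 : ‖d‖ ≤ 1) (hdb' : d * b' = b')
    (δ : ℝ) (hδ0 : 0 < δ) (hδ1 : δ < 1)
    (hdh : ‖(d : Unitization ℂ A) * (1 - (h : Unitization ℂ A))‖ ≤ Real.sqrt δ) :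
    cfcₙ Real.sqrt b' * (h * h) * cfcₙ Real.sqrt b' ≤ b' ∧
      (1 - 2 * Real.sqrt δ) • b' ≤ cfcₙ Real.sqrt b' * (h * h) * cfcₙ Real.sqrt b' ∧
      ‖b' - cfcₙ Real.sqrt b' * (h * h) * cfcₙ Real.sqrt b'‖ ≤ 2 * Real.sqrt δ := by
  set s := cfcₙ Real.sqrt b' with hs_def
  have hδ : (0:ℝ) ≤ Real.sqrt δ := Real.sqrt_nonneg δ
  have hbsa : IsSelfAdjoint b' := .of_nonneg hb'
  have hdsa : IsSelfAdjoint d := .of_nonneg hd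
  have hhsa : IsSelfAdjoint h := .of_nonneg hh
  have hs0 : 0 ≤ s := cfcₙ_nonneg fun x _ => Real.sqrt_nonneg x
  have hssa : IsSelfAdjoint s := .of_nonneg hs0
  have hss : s * s = b' := by
    rw [hs_def, ← cfcₙ_mul ..]
    conv_rhs => rw [← cfcₙ_id ℝ b']
    exact cfcₙ_congr fun x hx => Real.mul_self_sqrt
      (quasispectrum_nonneg_of_nonneg b' hb' x hx)
  have hhh_sa : IsSelfAdjoint (h * h) := by
    simpa [hhsa.star_eq] using IsSelfAdjoint.star_mul_self h
  -- d * s = s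
  have hb'd : b' * d = b' := by
    have := congrArg star hdb'
    rwa [star_mul, hbsa.star_eq, hdsa.star_eq] at this
  have hds : d * s = s := by
    have hz : (d * s - s) * star (d * s - s) = 0 := by
      rw [star_sub, star_mul, hssa.star_eq, hdsa.star_eq]
      have expand : (d * s - s) * (s * d - s)
          = d * (s * s) * d - d * (s * s) - (s * s) * d + s * s := by noncomm_ring
      rw [expand, hss, hdb', hb'd]
      abel
    exact sub_eq_zero.mp <| (CStarRing.mul_star_self_eq_zero_iff _).mp hz
  have hsd : s * d = s := by
    have := congrArg star hds
    rwa [star_mul, hssa.star_eq, hdsa.star_eq] at this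
  -- Part 1
  have hnorm_hh : ‖h * h‖ ≤ 1 := (norm_mul_le h h).trans (by nlinarith [norm_nonneg h])
  have h1 : s * (h * h) * s ≤ b' := by
    have hle : star s * (h * h) * s ≤ ‖h * h‖ • (star s * s) :=
      CStarAlgebra.star_left_conjugate_le_norm_smul hhh_sa
    rw [hssa.star_eq, hss] at hle
    refine hle.trans ?_
    calc ‖h * h‖ • b' ≤ (1 : ℝ) • b' := smul_le_smul_of_nonneg_right hnorm_hh hb'
      _ = b' := one_smul _ _
  -- Unitization estimates
  have hH0 : (0 : A⁺¹) ≤ (h : A⁺¹) := by rwa [Unitization.inr_nonneg_iff]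
  have hHsa : IsSelfAdjoint ((h : A⁺¹)) := hhsa.inr ℂ
  have hDsa : IsSelfAdjoint ((d : A⁺¹)) := hdsa.inr ℂ
  have hSsa : IsSelfAdjoint ((s : A⁺¹)) := hssa.inr ℂ
  have hHH0 : (0 : A⁺¹) ≤ (h : A⁺¹) * (h : A⁺¹) := by
    simpa [hHsa.star_eq] using star_mul_self_nonneg ((h : A⁺¹))
  have hHH1 : (h : A⁺¹) * (h : A⁺¹) ≤ 1 := by
    rw [← CStarAlgebra.norm_le_one_iff_of_nonneg _ hHH0, ← Unitization.inr_mul,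
      Unitization.norm_inr]
    exact hnorm_hh
  have hX0 : (0 : A⁺¹) ≤ (d : A⁺¹) * (1 - (h : A⁺¹) * (h : A⁺¹)) * (d : A⁺¹) := by
    have := star_left_conjugate_nonneg (sub_nonneg.mpr hHH1) ((d : A⁺¹))
    rwa [hDsa.star_eq] at this
  have hXnorm : ‖(d : A⁺¹) * (1 - (h : A⁺¹) * (h : A⁺¹)) * (d : A⁺¹)‖ ≤ 2 * Real.sqrt δ := by
    have hfact : (d : A⁺¹) * (1 - (h : A⁺¹) * (h : A⁺¹)) * (d : A⁺¹)
        = ((d : A⁺¹) * (1 - (h : A⁺¹))) * ((1 + (h : A⁺¹)) * (d : A⁺¹)) := by noncomm_ring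
    rw [hfact]
    have hb2 : ‖(1 + (h : A⁺¹)) * (d : A⁺¹)‖ ≤ 2 := by
      calc ‖(1 + (h : A⁺¹)) * (d : A⁺¹)‖ ≤ ‖1 + (h : A⁺¹)‖ * ‖(d : A⁺¹)‖ := norm_mul_le _ _
        _ ≤ 2 * 1 := by
            have := norm_add_le (1 : A⁺¹) ((h : A⁺¹))
            rw [norm_one, Unitization.norm_inr] at this
            have hDn : ‖(d : A⁺¹)‖ ≤ 1 := by rwa [Unitization.norm_inr]
            exact mul_le_mul (by linarith) hDn (norm_nonneg _) (by norm_num)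
        _ = 2 := mul_one _
    calc ‖((d : A⁺¹) * (1 - (h : A⁺¹))) * ((1 + (h : A⁺¹)) * (d : A⁺¹))‖
        ≤ ‖(d : A⁺¹) * (1 - (h : A⁺¹))‖ * ‖(1 + (h : A⁺¹)) * (d : A⁺¹)‖ := norm_mul_le _ _
      _ ≤ Real.sqrt δ * 2 := mul_le_mul hdh hb2 (norm_nonneg _) hδ
      _ = 2 * Real.sqrt δ := by ring
  have hXle : (d : A⁺¹) * (1 - (h : A⁺¹) * (h : A⁺¹)) * (d : A⁺¹)
      ≤ algebraMap ℝ (A⁺¹) (2 * Real.sqrt δ) :=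
    (CStarAlgebra.norm_le_iff_le_algebraMap _ (by positivity) hX0).mp hXnorm
  have key2 : (d : A⁺¹) * (d : A⁺¹) - algebraMap ℝ (A⁺¹) (2 * Real.sqrt δ)
      ≤ (d : A⁺¹) * ((h : A⁺¹) * (h : A⁺¹)) * (d : A⁺¹) := by
    have e : (d : A⁺¹) * (1 - (h : A⁺¹) * (h : A⁺¹)) * (d : A⁺¹)
        = (d : A⁺¹) * (d : A⁺¹) - (d : A⁺¹) * ((h : A⁺¹) * (h : A⁺¹)) * (d : A⁺¹) := by
      noncomm_ring
    rw [e] at hXle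
    exact sub_le_comm.mp hXle
  have hDS : (d : A⁺¹) * (s : A⁺¹) = (s : A⁺¹) := by rw [← Unitization.inr_mul, hds]
  have hSD : (s : A⁺¹) * (d : A⁺¹) = (s : A⁺¹) := by rw [← Unitization.inr_mul, hsd]
  have hSS : (s : A⁺¹) * (s : A⁺¹) = (b' : A⁺¹) := by rw [← Unitization.inr_mul, hss]
  have hconj := star_left_conjugate_le_conjugate key2 ((s : A⁺¹))
  rw [hSsa.star_eq] at hconj
  have lhs_eq : (s : A⁺¹) * ((d : A⁺¹) * (d : A⁺¹) - algebraMap ℝ (A⁺¹) (2 * Real.sqrt δ))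
        * (s : A⁺¹)
      = (b' : A⁺¹) - (2 * Real.sqrt δ) • (b' : A⁺¹) := by
    rw [mul_sub, sub_mul]
    congr 1
    · have e : (s : A⁺¹) * ((d : A⁺¹) * (d : A⁺¹)) * (s : A⁺¹)
          = ((s : A⁺¹) * (d : A⁺¹)) * ((d : A⁺¹) * (s : A⁺¹)) := by noncomm_ring
      rw [e, hSD, hDS, hSS]
    · rw [Algebra.algebraMap_eq_smul_one, mul_smul_comm, smul_mul_assoc, mul_one, hSS]
  have rhs_eq : (s : A⁺¹) * ((d : A⁺¹) * ((h : A⁺¹) * (h : A⁺¹)) * (d : A⁺¹)) * (s : A⁺¹)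
      = (s : A⁺¹) * ((h : A⁺¹) * (h : A⁺¹)) * (s : A⁺¹) := by
    have e : (s : A⁺¹) * ((d : A⁺¹) * ((h : A⁺¹) * (h : A⁺¹)) * (d : A⁺¹)) * (s : A⁺¹)
        = ((s : A⁺¹) * (d : A⁺¹)) * ((h : A⁺¹) * (h : A⁺¹)) * ((d : A⁺¹) * (s : A⁺¹)) := by
      noncomm_ring
    rw [e, hSD, hDS]
  rw [lhs_eq, rhs_eq] at hconj
  have hb''sa : IsSelfAdjoint (s * (h * h) * s) := by
    rw [IsSelfAdjoint]
    simp only [star_mul, hssa.star_eq, hhsa.star_eq, mul_assoc]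
  have h2 : (1 - 2 * Real.sqrt δ) • b' ≤ s * (h * h) * s := by
    rw [← Unitization.inr_le_iff _ _ (IsSelfAdjoint.smul (star_trivial _) hbsa) hb''sa,
      Unitization.inr_smul, Unitization.inr_mul, Unitization.inr_mul, Unitization.inr_mul,
      sub_smul, one_smul]
    exact hconj
  refine ⟨h1, h2, ?_⟩
  have hnn : 0 ≤ b' - s * (h * h) * s := sub_nonneg.mpr h1
  have hub : b' - s * (h * h) * s ≤ (2 * Real.sqrt δ) • b' := by
    refine (sub_le_sub_left h2 b').trans_eq ?_
    module
  calc ‖b' - s * (h * h) * s‖ ≤ ‖(2 * Real.sqrt δ) • b'‖ :=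
        CStarAlgebra.norm_le_norm_of_nonneg_of_le hnn hub
    _ = (2 * Real.sqrt δ) * ‖b'‖ := by
        rw [norm_smul, Real.norm_of_nonneg (by positivity)]
    _ ≤ (2 * Real.sqrt δ) * 1 := by
        exact mul_le_mul_of_nonneg_left hb'1 (by positivity)
    _ = 2 * Real.sqrt δ := mul_one _
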